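/- Every free and fair economy admits a pure strategy Nash equilibrium. That is, in any finite strategic form game where payoffs are given by the Shapley pay scheme applied to a production function, there exists a strategy profile x* such that for every player i and every y_i in X_i, u_i(x*) ≥ u_i(x*_{-i}, y_i). -/

import Mathlib

open Finset

noncomputable section

variable {ι : Type*}

/-- Sub-profile of `x` relative to the reference profile `o`:
agents in `S` play their `x`-coordinate, all others play their reference action. -/
def subp [DecidableEq ι] {X : ι → Type*} (o x : ∀ i, X i) (S : Finset ι) : ∀ i, X i :=
  fun j => if j ∈ S then x j else o j

/-- The set of active agents at profile `x` (those deviating from the reference `o`). -/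
def active [DecidableEq ι] [Fintype ι] {X : ι → Type*} [∀ i, DecidableEq (X i)]
    (o x : ∀ i, X i) : Finset ι :=
  Finset.univ.filter fun j => x j ≠ o j

/-- The multivariate Shapley pay scheme. -/
def Sh [DecidableEq ι] [Fintype ι] {X : ι → Type*} [∀ i, DecidableEq (X i)]
    (o : ∀ i, X i) (f : (∀ i, X i) → ℝ) (i : ι) (x : ∀ i, X i) : ℝ :=
  ∑ S ∈ ((active o x).erase i).powerset,
    ((S.card.factorial * ((active o x).card - S.card - 1).factorial : ℝ) /
        ((active o x).card.factorial)) *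
      (f (subp o x (insert i S)) - f (subp o x S))

end

noncomputable section Aux

variable {ι : Type*}

lemma fact_id (a k : ℕ) :
    ((a.factorial * (k+1).factorial : ℝ)) / (a+k+2).factorial
      - (a.factorial * k.factorial) / (a+k+1).factorial
      = -(((a+1).factorial * k.factorial : ℝ) / (a+k+2).factorial) := by
  have h1 : ((a+k+2).factorial : ℝ) = (a+k+2) * (a+k+1).factorial := by
    rw [show a+k+2 = (a+k+1)+1 from rfl, Nat.factorial_succ]; push_cast; ring
  have h2 : ((k+1).factorial : ℝ) = (k+1) * k.factorial := by
    rw [Nat.factorial_succ]; push_cast; ring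
  have h3 : ((a+1).factorial : ℝ) = (a+1) * a.factorial := by
    rw [Nat.factorial_succ]; push_cast; ring
  have p1 : ((a+k+1).factorial : ℝ) ≠ 0 := by
    exact_mod_cast Nat.factorial_ne_zero _
  rw [h1, h2, h3]
  field_simp
  ring

def Phi [DecidableEq ι] [Fintype ι] {X : ι → Type*} [∀ i, DecidableEq (X i)]
    (o : ∀ i, X i) (f : (∀ i, X i) → ℝ) (x : ∀ i, X i) : ℝ :=
  ∑ S ∈ (active o x).powerset,
    if S = ∅ then 0 else
      (((S.card - 1).factorial * ((active o x).card - S.card).factorial : ℝ) /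
        ((active o x).card.factorial)) * f (subp o x S)

lemma key [DecidableEq ι] [Fintype ι] {X : ι → Type*} [∀ i, DecidableEq (X i)]
    (o : ∀ i, X i) (f : (∀ i, X i) → ℝ) (hf : f o = 0) (i : ι) (x : ∀ i, X i) :
    Sh o f i x = Phi o f x - Phi o f (Function.update x i (o i)) := by
  by_cases h : x i = o i
  · have hx : Function.update x i (o i) = x := by rw [← h]; exact Function.update_eq_self i x
    have hs : ∀ S : Finset ι, subp o x (insert i S) = subp o x S := by
      intro S; funext j
      by_cases hj : j = i
      · subst hj; simp [subp]; intro _; exact h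
      · simp [subp, Finset.mem_insert, hj]
    simp [Sh, hs, hx]
  · set x' := Function.update x i (o i) with hx'
    set A' := (active o x).erase i with hA'
    have hiA : i ∈ active o x := by simp [active, h]
    have hni : i ∉ A' := Finset.notMem_erase i _
    have hA : active o x = insert i A' := (Finset.insert_erase hiA).symm
    have hcard : (active o x).card = A'.card + 1 := by
      rw [hA, Finset.card_insert_of_notMem hni]
    have hax' : active o x' = A' := by
      ext j
      by_cases hj : j = i
      · subst hj; simp [active, hx', A']
      · simp [active, hx', A', Function.update_of_ne hj, Finset.mem_erase, hj]
    have hsub : ∀ S : Finset ι, i ∉ S → subp o x' S = subp o x S := by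
      intro S hS; funext j
      by_cases hj : j ∈ S
      · have hji : j ≠ i := fun e => hS (e ▸ hj)
        simp [subp, hj, hx', Function.update_of_ne hji]
      · simp [subp, hj]
    have hsub0 : subp o x (∅ : Finset ι) = o := by funext j; simp [subp]
    have hPhi' : Phi o f x' = ∑ S ∈ A'.powerset,
        (if S = ∅ then 0 else
          (((S.card - 1).factorial * (A'.card - S.card).factorial : ℝ) /
            (A'.card.factorial)) * f (subp o x S)) := by
      rw [Phi, hax']
      refine Finset.sum_congr rfl fun S hS => ?_
      have hiS : i ∉ S := fun hmem =>
        hni ((Finset.mem_powerset.mp hS) hmem)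
      rw [hsub S hiS]
    have hPhi : Phi o f x = ∑ S ∈ A'.powerset,
        ((if S = ∅ then 0 else
          (((S.card - 1).factorial * ((active o x).card - S.card).factorial : ℝ) /
            ((active o x).card.factorial)) * f (subp o x S))
        + (if insert i S = ∅ then 0 else
          ((((insert i S).card - 1).factorial *
              ((active o x).card - (insert i S).card).factorial : ℝ) /
            ((active o x).card.factorial)) * f (subp o x (insert i S)))) := by
      rw [Phi]
      rw [show (active o x).powerset = (insert i A').powerset by rw [← hA]]
      rw [Finset.sum_powerset_insert hni]
      rw [← Finset.sum_add_distrib]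
    rw [hPhi, hPhi', Sh, ← hA', ← Finset.sum_sub_distrib]
    refine Finset.sum_congr rfl fun S hS => ?_
    have hSA : S ⊆ A' := Finset.mem_powerset.mp hS
    have hiS : i ∉ S := fun hmem => hni (hSA hmem)
    have hins : insert i S ≠ ∅ := Finset.insert_ne_empty i S
    have hcins : (insert i S).card = S.card + 1 := Finset.card_insert_of_notMem hiS
    rw [if_neg hins, hcins]
    by_cases hSe : S = ∅
    · subst hSe
      simp [hsub0, hf]
    · rw [if_neg hSe, if_neg hSe]
      have hpos : 1 ≤ S.card := Finset.card_pos.mpr (Finset.nonempty_of_ne_empty hSe)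
      have hle : S.card ≤ A'.card := Finset.card_le_card hSA
      obtain ⟨a, ha⟩ : ∃ a, S.card = a + 1 := ⟨S.card - 1, by omega⟩
      obtain ⟨k, hk⟩ : ∃ k, A'.card = a + k + 1 := ⟨A'.card - S.card, by omega⟩
      have e1 : (active o x).card = a + k + 2 := by omega
      have e2 : (active o x).card - S.card - 1 = k := by omega
      have e3 : (active o x).card - S.card = k + 1 := by omega
      have e4 : (active o x).card - (S.card + 1) = k := by omega
      have e5 : A'.card - S.card = k := by omega
      have e6 : S.card - 1 = a := by omega
      have e7 : S.card + 1 - 1 = a + 1 := by omega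
      rw [e2, e3, e4, e5, e6, e7, ha, hk, e1]
      linear_combination (-(f (subp o x S))) * fact_id a k

end Aux

/-- Every free and fair economy admits a pure strategy Nash equilibrium. -/
theorem stmt_1 {ι : Type*} [DecidableEq ι] [Fintype ι] {X : ι → Type*}
    [∀ i, Fintype (X i)] [∀ i, DecidableEq (X i)]
    (o : ∀ i, X i) (f : (∀ i, X i) → ℝ) (hf : f o = 0) :
    ∃ xs : ∀ i, X i, ∀ i : ι, ∀ y : X i,
      Sh o f i (Function.update xs i y) ≤ Sh o f i xs := by
  obtain ⟨xs, -, hxs⟩ := Finset.exists_max_image (Finset.univ : Finset (∀ i, X i))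
    (Phi o f) ⟨o, Finset.mem_univ o⟩
  refine ⟨xs, fun i y => ?_⟩
  rw [key o f hf i xs, key o f hf i (Function.update xs i y),
    Function.update_idem]
  exact sub_le_sub_right (hxs _ (Finset.mem_univ _)) _
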